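/- For every real α ≥ 1 and every real z > (√α + 1)², the Cauchy transform of μ_α is given by ∫ 1/(z − x) dμ_α(x) = ( z − (α − 1) − √((z − (α − 1))² − 4z) ) / (2z), where the square root is the nonnegative real square root (note (z − (α−1))² − 4z > 0 for such z). -/

import Mathlib

open MeasureTheory

noncomputable section

/-- The free Poisson density with parameter `α`:
`f_α(x) = √(4x − (x − (α−1))²) / (2πx)` on `[(√α − 1)², (√α + 1)²]` and `0` elsewhere. -/
def freePoissonDensity (α : ℝ) : ℝ → ℝ :=
  (Set.Icc ((Real.sqrt α - 1) ^ 2) ((Real.sqrt α + 1) ^ 2)).indicator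
    fun x => Real.sqrt (4 * x - (x - (α - 1)) ^ 2) / (2 * Real.pi * x)

/-- The free Poisson law `μ_α`: the measure on `ℝ` absolutely continuous with respect
to Lebesgue measure with density `f_α`. -/
def freePoissonLaw (α : ℝ) : Measure ℝ :=
  volume.withDensity fun x => ENNReal.ofReal (freePoissonDensity α x)

lemma fp_reduce (α z : ℝ) (hα : 1 ≤ α) :
    (∫ x, 1 / (z - x) ∂(freePoissonLaw α)) =
      ∫ x in ((Real.sqrt α - 1) ^ 2)..((Real.sqrt α + 1) ^ 2),
        Real.sqrt (4 * x - (x - (α - 1)) ^ 2) / (2 * Real.pi * x) * (1 / (z - x)) := by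
  have hab : ((Real.sqrt α - 1) ^ 2 : ℝ) ≤ (Real.sqrt α + 1) ^ 2 := by
    have h0 : (0:ℝ) ≤ Real.sqrt α := Real.sqrt_nonneg α
    nlinarith
  have hd0 : ∀ x, 0 ≤ freePoissonDensity α x := by
    intro x
    unfold freePoissonDensity
    apply Set.indicator_nonneg
    intro y hy
    have : 0 ≤ (2 * Real.pi * y) := by
      have : (0:ℝ) ≤ y := le_trans (sq_nonneg _) hy.1
      positivity
    positivity
  have hmeas : Measurable fun x => (freePoissonDensity α x).toNNReal := by
    apply Measurable.real_toNNReal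
    unfold freePoissonDensity
    have m1 : Measurable fun x : ℝ => Real.sqrt (4 * x - (x - (α - 1)) ^ 2) :=
      (Real.continuous_sqrt.comp (((continuous_const.mul continuous_id).sub
        ((continuous_id.sub continuous_const).pow 2)))).measurable
    have m2 : Measurable fun x : ℝ => (2 * Real.pi * x) :=
      (continuous_const.mul continuous_id).measurable
    exact Measurable.indicator (m1.div m2) measurableSet_Icc
  calc (∫ x, 1 / (z - x) ∂(freePoissonLaw α))
      = ∫ x, (freePoissonDensity α x).toNNReal • (1 / (z - x)) ∂volume := by
        rw [freePoissonLaw]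
        simp only [ENNReal.ofReal]
        exact integral_withDensity_eq_integral_smul hmeas _
    _ = ∫ x, freePoissonDensity α x * (1 / (z - x)) ∂volume := by
        congr 1; funext x
        rw [NNReal.smul_def, Real.coe_toNNReal _ (hd0 x), smul_eq_mul]
    _ = ∫ x in Set.Icc ((Real.sqrt α - 1) ^ 2) ((Real.sqrt α + 1) ^ 2),
          Real.sqrt (4 * x - (x - (α - 1)) ^ 2) / (2 * Real.pi * x) * (1 / (z - x)) ∂volume := by
        rw [← integral_indicator measurableSet_Icc]
        congr 1; funext x
        rw [freePoissonDensity, Set.indicator_mul_left]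
    _ = _ := by
        rw [integral_Icc_eq_integral_Ioc, intervalIntegral.integral_of_le hab]

lemma fp_deriv (α : ℝ) (hα : 1 ≤ α) (z R W : ℝ) (hR2 : R ^ 2 = α) (hR1 : 1 ≤ R)
    (hz : (R + 1) ^ 2 < z) (hW2 : W ^ 2 = (z - (α - 1)) ^ 2 - 4 * z) (hW0 : 0 < W)
    (x : ℝ) (hxa : (R - 1) ^ 2 < x) (hxb : x < (R + 1) ^ 2) :
    HasDerivAt (fun x => (1 / (2 * Real.pi * z)) *
      (z * Real.arcsin ((x - (α + 1)) / (2 * R))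
        + (α - 1) * Real.arcsin (((α - 1) ^ 2 - (α + 1) * x) / (2 * R * x))
        + W * Real.arcsin (((z - (α + 1)) * (x - (α + 1)) - 4 * α) / (2 * R * (x - z)))))
      (Real.sqrt (4 * x - (x - (α - 1)) ^ 2) / (2 * Real.pi * x) * (1 / (z - x))) x := by
  have hR0 : 0 < R := by linarith
  have hx0 : 0 < x := by nlinarith
  have hxz : x < z := by nlinarith
  have hz0 : 0 < z := by nlinarith
  have hQ : 0 < 4 * x - (x - (α - 1)) ^ 2 := by nlinarith
  set S := Real.sqrt (4 * x - (x - (α - 1)) ^ 2) with hS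
  have hS2 : S ^ 2 = 4 * x - (x - (α - 1)) ^ 2 := Real.sq_sqrt hQ.le
  have hS0 : 0 < S := Real.sqrt_pos.mpr hQ
  have hπ := Real.pi_pos
  -- term 1
  have hsq1 : Real.sqrt (1 - ((x - (α + 1)) / (2 * R)) ^ 2) = S / (2 * R) := by
    rw [show 1 - ((x - (α + 1)) / (2 * R)) ^ 2 = (S / (2 * R)) ^ 2 by
      field_simp; linear_combination -hS2 + 4 * hR2]
    exact Real.sqrt_sq (by positivity)
  have hu1ne : ((x - (α + 1)) / (2 * R)) ≠ -1 ∧ ((x - (α + 1)) / (2 * R)) ≠ 1 := by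
    have hpos : 0 < S / (2 * R) := div_pos hS0 (by positivity)
    constructor <;> intro h <;> rw [h] at hsq1 <;> simp at hsq1 <;> linarith
  have hu1 : HasDerivAt (fun y : ℝ => (y - (α + 1)) / (2 * R)) (1 / (2 * R)) x := by
    simpa using ((hasDerivAt_id x).sub_const (α + 1)).div_const (2 * R)
  have hd1 : HasDerivAt (fun y : ℝ => z * Real.arcsin ((y - (α + 1)) / (2 * R)))
      (z / S) x := by
    have h := ((Real.hasDerivAt_arcsin hu1ne.1 hu1ne.2).comp x hu1).const_mul z
    refine h.congr_deriv ?_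
    rw [hsq1]; field_simp
  -- term 2
  have hd2 : HasDerivAt (fun y : ℝ => (α - 1) *
      Real.arcsin (((α - 1) ^ 2 - (α + 1) * y) / (2 * R * y)))
      (-((α - 1) ^ 2 / (x * S))) x := by
    rcases eq_or_lt_of_le hα with hα1 | hα1
    · rw [show (fun y : ℝ => (α - 1) *
          Real.arcsin (((α - 1) ^ 2 - (α + 1) * y) / (2 * R * y))) = fun _ => (0:ℝ) from
        funext fun y => by rw [← hα1]; ring]
      rw [show -((α - 1) ^ 2 / (x * S)) = 0 by rw [← hα1]; ring]
      exact hasDerivAt_const x 0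
    · have hα1' : 0 < α - 1 := by linarith
      have hsq2 : Real.sqrt (1 - (((α - 1) ^ 2 - (α + 1) * x) / (2 * R * x)) ^ 2)
          = S * (α - 1) / (2 * R * x) := by
        rw [show 1 - (((α - 1) ^ 2 - (α + 1) * x) / (2 * R * x)) ^ 2
            = (S * (α - 1) / (2 * R * x)) ^ 2 by
          field_simp; linear_combination (-(α - 1) ^ 2) * hS2 + 4 * x ^ 2 * hR2]
        exact Real.sqrt_sq (by positivity)
      have hu2ne : (((α - 1) ^ 2 - (α + 1) * x) / (2 * R * x)) ≠ -1 ∧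
          (((α - 1) ^ 2 - (α + 1) * x) / (2 * R * x)) ≠ 1 := by
        have hpos : 0 < S * (α - 1) / (2 * R * x) := by positivity
        constructor <;> intro h <;> rw [h] at hsq2 <;> simp at hsq2 <;> linarith
      have hu2 : HasDerivAt (fun y : ℝ => ((α - 1) ^ 2 - (α + 1) * y) / (2 * R * y))
          ((-(α + 1) * (2 * R * x) - ((α - 1) ^ 2 - (α + 1) * x) * (2 * R)) / (2 * R * x) ^ 2)
          x := by
        have hnum : HasDerivAt (fun y : ℝ => (α - 1) ^ 2 - (α + 1) * y) (-(α + 1)) x := by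
          simpa using (((hasDerivAt_id x).const_mul (α + 1)).const_sub ((α - 1) ^ 2))
        have hden : HasDerivAt (fun y : ℝ => 2 * R * y) (2 * R) x := by
          simpa using (hasDerivAt_id x).const_mul (2 * R)
        exact hnum.div hden (by positivity)
      have h := ((Real.hasDerivAt_arcsin hu2ne.1 hu2ne.2).comp x hu2).const_mul (α - 1)
      refine h.congr_deriv ?_
      rw [hsq2]
      field_simp
      ring
  -- term 3
  have hzx0 : 0 < z - x := by nlinarith
  have hxzne : x - z ≠ 0 := by intro h; nlinarith
  have hEne : 2 * R * (x - z) ≠ 0 := mul_ne_zero (by positivity) hxzne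
  have key3 : (2 * R * (x - z)) ^ 2 - ((z - (α + 1)) * (x - (α + 1)) - 4 * α) ^ 2
      = (S * W) ^ 2 := by
    linear_combination (4 * (x - z) ^ 2) * hR2 - W ^ 2 * hS2
      - (4 * x - (x - (α - 1)) ^ 2) * hW2
  have hsq3 : Real.sqrt (1 - (((z - (α + 1)) * (x - (α + 1)) - 4 * α) / (2 * R * (x - z))) ^ 2)
      = S * W / (2 * R * (z - x)) := by
    rw [show 1 - (((z - (α + 1)) * (x - (α + 1)) - 4 * α) / (2 * R * (x - z))) ^ 2
        = (S * W / (2 * R * (z - x))) ^ 2 by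
      rw [div_pow, div_pow, show (2 * R * (z - x)) ^ 2 = (2 * R * (x - z)) ^ 2 by ring,
        ← key3, eq_div_iff (pow_ne_zero 2 hEne), sub_mul, one_mul,
        div_mul_cancel₀ _ (pow_ne_zero 2 hEne)]]
    exact Real.sqrt_sq (div_pos (mul_pos hS0 hW0) (by positivity)).le
  have hu3ne : (((z - (α + 1)) * (x - (α + 1)) - 4 * α) / (2 * R * (x - z))) ≠ -1 ∧
      (((z - (α + 1)) * (x - (α + 1)) - 4 * α) / (2 * R * (x - z))) ≠ 1 := by
    have hpos : 0 < S * W / (2 * R * (z - x)) := by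
      exact div_pos (mul_pos hS0 hW0) (by positivity)
    constructor <;> intro h <;> rw [h] at hsq3 <;> simp at hsq3 <;> linarith
  have hu3 : HasDerivAt (fun y : ℝ => ((z - (α + 1)) * (y - (α + 1)) - 4 * α) / (2 * R * (y - z)))
      (((z - (α + 1)) * (2 * R * (x - z)) - ((z - (α + 1)) * (x - (α + 1)) - 4 * α) * (2 * R))
        / (2 * R * (x - z)) ^ 2) x := by
    have hnum : HasDerivAt (fun y : ℝ => (z - (α + 1)) * (y - (α + 1)) - 4 * α)
        (z - (α + 1)) x := by
      simpa using ((((hasDerivAt_id x).sub_const (α + 1)).const_mul (z - (α + 1))).sub_const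
        (4 * α))
    have hden : HasDerivAt (fun y : ℝ => 2 * R * (y - z)) (2 * R) x := by
      simpa using ((hasDerivAt_id x).sub_const z).const_mul (2 * R)
    exact hnum.div hden hEne
  have hq3 : ((z - (α + 1)) * (2 * R * (x - z)) - ((z - (α + 1)) * (x - (α + 1)) - 4 * α) * (2 * R))
      / (2 * R * (x - z)) ^ 2 = -(W ^ 2 / (2 * R * (x - z) ^ 2)) := by
    rw [div_eq_iff (pow_ne_zero 2 hEne)]
    have hne2 : (2 : ℝ) * R * (x - z) ^ 2 ≠ 0 := by positivity
    field_simp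
    linear_combination hW2
  have hd3 : HasDerivAt (fun y : ℝ => W *
      Real.arcsin (((z - (α + 1)) * (y - (α + 1)) - 4 * α) / (2 * R * (y - z))))
      (-(W ^ 2 / ((z - x) * S))) x := by
    have h := ((Real.hasDerivAt_arcsin hu3ne.1 hu3ne.2).comp x hu3).const_mul W
    rw [hq3, hsq3] at h
    refine h.congr_deriv ?_
    have hzx : z - x ≠ 0 := by positivity
    field_simp
    ring
  -- assemble
  have hkey : z * (x * (z - x)) - (α - 1) ^ 2 * (z - x) - W ^ 2 * x = z * S ^ 2 := by
    linear_combination (-z) * hS2 - x * hW2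
  have comb : z / S + -((α - 1) ^ 2 / (x * S)) + -(W ^ 2 / ((z - x) * S))
      = (z * (x * (z - x)) - (α - 1) ^ 2 * (z - x) - W ^ 2 * x) / (x * (z - x) * S) := by
    have hzxne : z - x ≠ 0 := by positivity
    field_simp
    ring
  have htot := ((hd1.add hd2).add hd3).const_mul (1 / (2 * Real.pi * z))
  refine htot.congr_deriv ?_
  rw [comb, hkey]
  have hzxne : z - x ≠ 0 := by positivity
  field_simp

lemma fp_int (α : ℝ) (hα : 1 ≤ α) (z R : ℝ) (hR2 : R ^ 2 = α) (hR1 : 1 ≤ R)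
    (hz : (R + 1) ^ 2 < z) :
    IntervalIntegrable (fun x =>
      Real.sqrt (4 * x - (x - (α - 1)) ^ 2) / (2 * Real.pi * x) * (1 / (z - x)))
      volume ((R - 1) ^ 2) ((R + 1) ^ 2) := by
  set a := (R - 1) ^ 2 with ha
  set b := (R + 1) ^ 2 with hb
  have hR0 : 0 < R := by linarith
  have hab : a ≤ b := by nlinarith
  have ha0 : (0:ℝ) ≤ a := sq_nonneg _
  have hzb : 0 < z - b := by linarith
  have hb0 : 0 < b := by positivity
  have hπ := Real.pi_pos
  set C := Real.sqrt b / (2 * Real.pi * (z - b)) with hC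
  -- the comparison function
  have hg : IntervalIntegrable (fun x => C * (x - a) ^ (-(1/2) : ℝ)) volume a b := by
    have h0 : IntervalIntegrable (fun t : ℝ => t ^ (-(1/2) : ℝ)) volume 0 (b - a) :=
      intervalIntegral.intervalIntegrable_rpow' (by norm_num)
    have h1 := (h0.comp_sub_right a).const_mul C
    simpa using h1
  apply hg.mono_fun
  · apply Measurable.aestronglyMeasurable
    have m1 : Measurable fun x : ℝ => Real.sqrt (4 * x - (x - (α - 1)) ^ 2) :=
      (Real.continuous_sqrt.comp (((continuous_const.mul continuous_id).sub
        ((continuous_id.sub continuous_const).pow 2)))).measurable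
    have m2 : Measurable fun x : ℝ => (2 * Real.pi * x) :=
      (continuous_const.mul continuous_id).measurable
    exact (m1.div m2).mul ((measurable_const.sub measurable_id).const_div 1)
  · rw [Filter.EventuallyLE, ae_restrict_iff' measurableSet_uIoc]
    filter_upwards with x hx
    rw [Set.uIoc_of_le hab] at hx
    obtain ⟨hxa, hxb⟩ := hx
    have hxa0 : 0 < x - a := by linarith
    have hx0 : 0 < x := by nlinarith
    have hzx : 0 < z - x := by nlinarith
    have hfnn : 0 ≤ Real.sqrt (4 * x - (x - (α - 1)) ^ 2) / (2 * Real.pi * x) * (1 / (z - x)) := by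
      positivity
    have hCnn : (0:ℝ) < C := by positivity
    have hrpow : (x - a) ^ (-(1/2) : ℝ) = 1 / Real.sqrt (x - a) := by
      rw [Real.rpow_neg hxa0.le, Real.sqrt_eq_rpow]
      norm_num
    simp only [Real.norm_eq_abs, abs_of_nonneg hfnn]
    rw [abs_of_nonneg (by rw [hrpow]; positivity)]
    rw [hrpow]
    have h1 : Real.sqrt (4 * x - (x - (α - 1)) ^ 2) ≤ Real.sqrt (x - a) * Real.sqrt b := by
      rw [← Real.sqrt_mul hxa0.le b]
      apply Real.sqrt_le_sqrt
      nlinarith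
    calc Real.sqrt (4 * x - (x - (α - 1)) ^ 2) / (2 * Real.pi * x) * (1 / (z - x))
        ≤ (Real.sqrt (x - a) * Real.sqrt b) / (2 * Real.pi * (x - a)) * (1 / (z - b)) := by
          gcongr ?_ / (2 * Real.pi * ?_) * (1 / ?_)
          · linarith
          · linarith
      _ = C * (1 / Real.sqrt (x - a)) := by
          rw [hC]
          have hu : Real.sqrt (x - a) ^ 2 = x - a := Real.sq_sqrt hxa0.le
          have hu0 : 0 < Real.sqrt (x - a) := Real.sqrt_pos.mpr hxa0
          field_simp
          linear_combination hu

lemma fp_cont (α : ℝ) (hα : 1 ≤ α) (z R W : ℝ) (hR2 : R ^ 2 = α) (hR1 : 1 ≤ R)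
    (hz : (R + 1) ^ 2 < z) :
    ContinuousOn (fun x => (1 / (2 * Real.pi * z)) *
      (z * Real.arcsin ((x - (α + 1)) / (2 * R))
        + (α - 1) * Real.arcsin (((α - 1) ^ 2 - (α + 1) * x) / (2 * R * x))
        + W * Real.arcsin (((z - (α + 1)) * (x - (α + 1)) - 4 * α) / (2 * R * (x - z)))))
      (Set.Icc ((R - 1) ^ 2) ((R + 1) ^ 2)) := by
  have hR0 : 0 < R := by linarith
  refine continuousOn_const.mul (ContinuousOn.add (ContinuousOn.add ?_ ?_) ?_)
  · exact (continuous_const.mul (Real.continuous_arcsin.comp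
      (by fun_prop : Continuous fun x : ℝ => (x - (α + 1)) / (2 * R)))).continuousOn
  · rcases eq_or_lt_of_le hα with hα1 | hα1
    · have : (fun x : ℝ => (α - 1) *
          Real.arcsin (((α - 1) ^ 2 - (α + 1) * x) / (2 * R * x))) = fun _ => (0:ℝ) :=
        funext fun y => by rw [← hα1]; ring
      rw [this]; exact continuousOn_const
    · have hR1' : 1 < R := by nlinarith
      apply continuousOn_const.mul
      apply Real.continuous_arcsin.comp_continuousOn
      apply ContinuousOn.div (by fun_prop) (by fun_prop)
      intro x hx
      have hx0 : 0 < x := lt_of_lt_of_le (by nlinarith : (0:ℝ) < (R - 1) ^ 2) hx.1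
      exact (mul_pos (by positivity : (0:ℝ) < 2 * R) hx0).ne'
  · apply continuousOn_const.mul
    apply Real.continuous_arcsin.comp_continuousOn
    apply ContinuousOn.div (by fun_prop) (by fun_prop)
    intro x hx
    have h1 : x - z < 0 := by
      have := hx.2; simp only [Set.mem_Icc] at hx; linarith [hx.2]
    intro h; rw [mul_eq_zero] at h
    rcases h with h | h
    · nlinarith
    · linarith

lemma fp_eval (α : ℝ) (hα : 1 ≤ α) (z : ℝ) (R : ℝ) (hR2 : R ^ 2 = α) (hR1 : 1 ≤ R)
    (hz : (R + 1) ^ 2 < z) (W : ℝ) :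
    (1 / (2 * Real.pi * z)) *
      (z * Real.arcsin (((R + 1) ^ 2 - (α + 1)) / (2 * R))
        + (α - 1) * Real.arcsin (((α - 1) ^ 2 - (α + 1) * (R + 1) ^ 2) / (2 * R * (R + 1) ^ 2))
        + W * Real.arcsin (((z - (α + 1)) * ((R + 1) ^ 2 - (α + 1)) - 4 * α)
            / (2 * R * ((R + 1) ^ 2 - z))))
    - (1 / (2 * Real.pi * z)) *
      (z * Real.arcsin (((R - 1) ^ 2 - (α + 1)) / (2 * R))
        + (α - 1) * Real.arcsin (((α - 1) ^ 2 - (α + 1) * (R - 1) ^ 2) / (2 * R * (R - 1) ^ 2))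
        + W * Real.arcsin (((z - (α + 1)) * ((R - 1) ^ 2 - (α + 1)) - 4 * α)
            / (2 * R * ((R - 1) ^ 2 - z))))
    = (z - (α - 1) - W) / (2 * z) := by
  have hR0 : 0 < R := by linarith
  have hz0 : 0 < z := by nlinarith
  have haz : (R - 1) ^ 2 < z := by nlinarith
  have e1b : (((R + 1) ^ 2 : ℝ) - (α + 1)) / (2 * R) = 1 := by
    rw [div_eq_one_iff_eq (by positivity)]; rw [← hR2]; ring
  have e1a : (((R - 1) ^ 2 : ℝ) - (α + 1)) / (2 * R) = -1 := by
    rw [div_eq_iff (by positivity)]; rw [← hR2]; ring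
  have e2b : (((α : ℝ) - 1) ^ 2 - (α + 1) * (R + 1) ^ 2) / (2 * R * (R + 1) ^ 2) = -1 := by
    rw [div_eq_iff (by positivity)]; rw [← hR2]; ring
  have e3b : (((z : ℝ) - (α + 1)) * ((R + 1) ^ 2 - (α + 1)) - 4 * α) / (2 * R * ((R + 1) ^ 2 - z)) = -1 := by
    rw [div_eq_iff (by nlinarith)]; rw [← hR2]; ring
  have e3a : (((z : ℝ) - (α + 1)) * ((R - 1) ^ 2 - (α + 1)) - 4 * α) / (2 * R * ((R - 1) ^ 2 - z)) = 1 := by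
    rw [div_eq_one_iff_eq (by nlinarith)]; rw [← hR2]; ring
  have e2a' : (α - 1) * Real.arcsin ((((α : ℝ) - 1) ^ 2 - (α + 1) * (R - 1) ^ 2) / (2 * R * (R - 1) ^ 2)) =
      (α - 1) * (Real.pi / 2) := by
    rcases eq_or_lt_of_le hα with h1 | h1
    · rw [← h1]; ring
    · have hR1' : 1 < R := by nlinarith
      have e2a : (((α : ℝ) - 1) ^ 2 - (α + 1) * (R - 1) ^ 2) / (2 * R * (R - 1) ^ 2) = 1 := by
        rw [div_eq_one_iff_eq (by nlinarith : (0:ℝ) < 2 * R * (R - 1) ^ 2).ne']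
        rw [← hR2]; ring
      rw [e2a, Real.arcsin_one]
  rw [e1b, e1a, e2b, e3b, e3a, e2a', Real.arcsin_one, Real.arcsin_neg_one]
  have hpi : Real.pi ≠ 0 := Real.pi_ne_zero
  field_simp
  ring

/-- For every real `α ≥ 1` and every real `z > (√α + 1)²`, the Cauchy transform of
`μ_α` is `∫ 1/(z − x) dμ_α(x) = (z − (α−1) − √((z − (α−1))² − 4z)) / (2z)`. -/
theorem stmt13 (α : ℝ) (hα : 1 ≤ α) (z : ℝ) (hz : (Real.sqrt α + 1) ^ 2 < z) :
    (∫ x, 1 / (z - x) ∂(freePoissonLaw α)) =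
      (z - (α - 1) - Real.sqrt ((z - (α - 1)) ^ 2 - 4 * z)) / (2 * z) := by
  rw [fp_reduce α z hα]
  set R := Real.sqrt α with hRdef
  have hα0 : (0:ℝ) ≤ α := by linarith
  have hR2 : R ^ 2 = α := Real.sq_sqrt hα0
  have hR1 : 1 ≤ R := by nlinarith [Real.sqrt_nonneg α]
  have hR0 : 0 < R := by linarith
  have hab : ((R - 1) ^ 2 : ℝ) ≤ (R + 1) ^ 2 := by nlinarith
  have hz0 : 0 < z := by nlinarith
  have hD0 : 0 < (z - (α - 1)) ^ 2 - 4 * z := by nlinarith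
  set W := Real.sqrt ((z - (α - 1)) ^ 2 - 4 * z) with hWdef
  have hW2 : W ^ 2 = (z - (α - 1)) ^ 2 - 4 * z := Real.sq_sqrt hD0.le
  have hW0 : 0 < W := Real.sqrt_pos.mpr hD0
  have hFTC := intervalIntegral.integral_eq_sub_of_hasDeriv_right_of_le hab
    (fp_cont α hα z R W hR2 hR1 hz)
    (fun x hx => (fp_deriv α hα z R W hR2 hR1 hz hW2 hW0 x hx.1 hx.2).hasDerivWithinAt)
    (fp_int α hα z R hR2 hR1 hz)
  rw [hFTC]
  exact fp_eval α hα z R hR2 hR1 hz W
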